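/- For every n ≥ 3, the number of permutations of {1,...,n} avoiding 13-2 and containing exactly two occurrences of 23-1 equals 2^(n-1) - n - 1. -/

import Mathlib

/-- The value of the permutation at position `i` (0-indexed), or 0 if out of range. -/
def permVal {n : ℕ} (π : Equiv.Perm (Fin n)) (i : ℕ) : ℕ :=
  if h : i < n then (π ⟨i, h⟩ : ℕ) else 0

/-- Number of occurrences of the generalized pattern 12-3. -/
def occ12_3 {n : ℕ} (π : Equiv.Perm (Fin n)) : ℕ :=
  ((Finset.range n ×ˢ Finset.range n).filter (fun p =>
    p.1 + 1 < p.2 ∧ permVal π p.1 < permVal π (p.1 + 1) ∧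
      permVal π (p.1 + 1) < permVal π p.2)).card

/-- Number of occurrences of the generalized pattern 13-2. -/
def occ13_2 {n : ℕ} (π : Equiv.Perm (Fin n)) : ℕ :=
  ((Finset.range n ×ˢ Finset.range n).filter (fun p =>
    p.1 + 1 < p.2 ∧ permVal π p.1 < permVal π p.2 ∧
      permVal π p.2 < permVal π (p.1 + 1))).card

/-- Number of occurrences of the generalized pattern 21-3. -/
def occ21_3 {n : ℕ} (π : Equiv.Perm (Fin n)) : ℕ :=
  ((Finset.range n ×ˢ Finset.range n).filter (fun p =>
    p.1 + 1 < p.2 ∧ permVal π (p.1 + 1) < permVal π p.1 ∧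
      permVal π p.1 < permVal π p.2)).card

/-- Number of occurrences of the generalized pattern 23-1. -/
def occ23_1 {n : ℕ} (π : Equiv.Perm (Fin n)) : ℕ :=
  ((Finset.range n ×ˢ Finset.range n).filter (fun p =>
    p.1 + 1 < p.2 ∧ permVal π p.2 < permVal π p.1 ∧
      permVal π p.1 < permVal π (p.1 + 1))).card

/-- Number of occurrences of the generalized pattern 31-2. -/
def occ31_2 {n : ℕ} (π : Equiv.Perm (Fin n)) : ℕ :=
  ((Finset.range n ×ˢ Finset.range n).filter (fun p =>
    p.1 + 1 < p.2 ∧ permVal π (p.1 + 1) < permVal π p.2 ∧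
      permVal π p.2 < permVal π p.1)).card

/-- Number of occurrences of the generalized pattern 32-1. -/
def occ32_1 {n : ℕ} (π : Equiv.Perm (Fin n)) : ℕ :=
  ((Finset.range n ×ˢ Finset.range n).filter (fun p =>
    p.1 + 1 < p.2 ∧ permVal π p.2 < permVal π (p.1 + 1) ∧
      permVal π (p.1 + 1) < permVal π p.1)).card


-- ## generic counting

def C13 (a b c : ℕ) : Prop := a < c ∧ c < b
def C23 (a b c : ℕ) : Prop := c < a ∧ a < b

instance C13dec : ∀ a b c : ℕ, Decidable (C13 a b c) := fun _ _ _ => by unfold C13; infer_instance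
instance C23dec : ∀ a b c : ℕ, Decidable (C23 a b c) := fun _ _ _ => by unfold C23; infer_instance

def cnt (n : ℕ) (v : ℕ → ℕ) (C : ℕ → ℕ → ℕ → Prop) [∀ a b c : ℕ, Decidable (C a b c)] : ℕ :=
  ((Finset.range n ×ˢ Finset.range n).filter (fun p =>
    p.1 + 1 < p.2 ∧ C (v p.1) (v (p.1 + 1)) (v p.2))).card

lemma occ13_2_eq_cnt {n : ℕ} (π : Equiv.Perm (Fin n)) : occ13_2 π = cnt n (permVal π) C13 := by
  unfold occ13_2 cnt C13; congr 1

lemma occ23_1_eq_cnt {n : ℕ} (π : Equiv.Perm (Fin n)) : occ23_1 π = cnt n (permVal π) C23 := by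
  unfold occ23_1 cnt C23; congr 1

variable {C : ℕ → ℕ → ℕ → Prop} [∀ a b c : ℕ, Decidable (C a b c)]

lemma mem_cntset {n : ℕ} {v : ℕ → ℕ} {p : ℕ × ℕ} :
    p ∈ ((Finset.range n ×ˢ Finset.range n).filter (fun p =>
      p.1 + 1 < p.2 ∧ C (v p.1) (v (p.1 + 1)) (v p.2))) ↔
    p.1 + 1 < p.2 ∧ p.2 < n ∧ C (v p.1) (v (p.1 + 1)) (v p.2) := by
  simp only [Finset.mem_filter, Finset.mem_product, Finset.mem_range]
  constructor
  · rintro ⟨⟨h1, h2⟩, h3, h4⟩; exact ⟨h3, h2, h4⟩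
  · rintro ⟨h1, h2, h3⟩; exact ⟨⟨by omega, h2⟩, h1, h3⟩

lemma cnt_congr {n : ℕ} {v w : ℕ → ℕ} (h : ∀ i < n, v i = w i) : cnt n v C = cnt n w C := by
  unfold cnt
  congr 1
  apply Finset.filter_congr
  intro p hp
  simp only [Finset.mem_product, Finset.mem_range] at hp
  by_cases hc : p.1 + 1 < p.2
  · rw [h p.1 hp.1, h p.2 hp.2, h (p.1+1) (by omega)]
  · simp only [hc, false_and]

lemma cnt_zero_iff {n : ℕ} {v : ℕ → ℕ} :
    cnt n v C = 0 ↔ ∀ i j : ℕ, i + 1 < j → j < n → ¬ C (v i) (v (i + 1)) (v j) := by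
  unfold cnt
  rw [Finset.card_eq_zero, Finset.filter_eq_empty_iff]
  constructor
  · intro h i j hij hj hc
    exact h (x := (i, j)) (by simp only [Finset.mem_product, Finset.mem_range]; exact ⟨by omega, hj⟩) ⟨hij, hc⟩
  · rintro h p hp ⟨h1, h2⟩
    simp only [Finset.mem_product, Finset.mem_range] at hp
    exact h p.1 p.2 h1 hp.2 h2

lemma cnt_front {n : ℕ} {v : ℕ → ℕ} (h : ∀ j < n + 1, ¬ C (v 0) (v 1) (v j)) :
    cnt (n + 1) v C = cnt n (fun i => v (i + 1)) C := by
  classical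
  unfold cnt
  refine Finset.card_bij' (fun p _ => (p.1 - 1, p.2 - 1)) (fun p _ => (p.1 + 1, p.2 + 1)) ?_ ?_ ?_ ?_
  · -- hi
    rintro ⟨a, b⟩ hp
    rw [mem_cntset] at hp
    obtain ⟨h1, h2, h3⟩ := hp
    simp only at h3 ⊢
    have hp1 : a ≠ 0 := by
      rintro hq
      rw [hq] at h3
      exact h b (by omega) h3
    have e1 : a - 1 + 1 = a := by omega
    have e2 : a - 1 + 1 + 1 = a + 1 := by omega
    have e3 : b - 1 + 1 = b := by omega
    rw [mem_cntset (v := fun i => v (i + 1))]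
    simp only
    rw [e1, e3]
    exact ⟨by omega, by omega, h3⟩
  · -- hj
    rintro ⟨a, b⟩ hp
    rw [mem_cntset (v := fun i => v (i + 1))] at hp
    simp only at hp
    show ((a + 1, b + 1) : ℕ × ℕ) ∈ _
    rw [mem_cntset]
    exact ⟨by omega, by omega, hp.2.2⟩
  · -- left_inv
    rintro ⟨a, b⟩ hp
    rw [mem_cntset] at hp
    obtain ⟨h1, h2, h3⟩ := hp
    simp only at h3
    have hp1 : a ≠ 0 := by
      rintro hq
      rw [hq] at h3
      exact h b (by omega) h3
    simp only [Prod.mk.injEq]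
    omega
  · -- right_inv
    rintro ⟨a, b⟩ hp
    simp only [Prod.mk.injEq]
    omega

lemma cnt_back {n : ℕ} {v : ℕ → ℕ} (h : ∀ i, i + 1 < n → ¬ C (v i) (v (i + 1)) (v n)) :
    cnt (n + 1) v C = cnt n v C := by
  classical
  unfold cnt
  congr 1
  apply Finset.Subset.antisymm
  · intro p hp
    rw [mem_cntset] at hp ⊢
    obtain ⟨h1, h2, h3⟩ := hp
    refine ⟨h1, ?_, h3⟩
    rcases Nat.lt_or_ge p.2 n with h4 | h4
    · exact h4
    · exfalso
      have : p.2 = n := by omega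
      rw [this] at h3
      exact h p.1 (by omega) h3
  · intro p hp
    rw [mem_cntset] at hp ⊢
    exact ⟨hp.1, by omega, hp.2.2⟩

-- ## basic permVal lemmas

lemma permVal_le {n : ℕ} (π : Equiv.Perm (Fin (n+1))) (i : ℕ) : permVal π i ≤ n := by
  unfold permVal
  split
  · exact Nat.lt_succ_iff.mp (Fin.is_lt _)
  · omega

lemma permVal_inj {n : ℕ} (π : Equiv.Perm (Fin n)) {i j : ℕ} (hi : i < n) (hj : j < n)
    (h : permVal π i = permVal π j) : i = j := by
  unfold permVal at h
  rw [dif_pos hi, dif_pos hj] at h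
  have := π.injective (Fin.val_injective h)
  exact congrArg Fin.val this

lemma permVal_surj {n : ℕ} (π : Equiv.Perm (Fin n)) {v : ℕ} (hv : v < n) :
    ∃ p, p < n ∧ permVal π p = v := by
  refine ⟨(π.symm ⟨v, hv⟩ : Fin n), Fin.is_lt _, ?_⟩
  unfold permVal
  rw [dif_pos (Fin.is_lt _)]
  simp

-- ## front insertion / removal

noncomputable def addFront {n : ℕ} (σ : Equiv.Perm (Fin n)) : Equiv.Perm (Fin (n+1)) :=
  Equiv.ofBijective (fun i => Fin.cases (Fin.last n) (fun j => (σ j).castSucc) i)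
    (Finite.injective_iff_bijective.mp (by
      intro a b hab
      induction a using Fin.cases <;> induction b using Fin.cases <;>
        simp [Fin.succ_ne_zero, (Fin.castSucc_lt_last _).ne, (Fin.castSucc_lt_last _).ne',
          Fin.castSucc_inj] at hab ⊢
      exact hab))

lemma addFront_zero {n : ℕ} (σ : Equiv.Perm (Fin n)) : addFront σ 0 = Fin.last n := by
  simp [addFront]

lemma addFront_succ {n : ℕ} (σ : Equiv.Perm (Fin n)) (i : Fin n) :
    addFront σ i.succ = (σ i).castSucc := by
  simp [addFront]

lemma permVal_addFront_zero {n : ℕ} (σ : Equiv.Perm (Fin n)) : permVal (addFront σ) 0 = n := by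
  unfold permVal
  rw [dif_pos (by omega)]
  have : (⟨0, by omega⟩ : Fin (n+1)) = 0 := rfl
  rw [this, addFront_zero]
  simp

lemma permVal_addFront_succ {n : ℕ} (σ : Equiv.Perm (Fin n)) {i : ℕ} (h : i < n) :
    permVal (addFront σ) (i + 1) = permVal σ i := by
  unfold permVal
  rw [dif_pos (by omega), dif_pos h]
  have : (⟨i + 1, by omega⟩ : Fin (n+1)) = (⟨i, h⟩ : Fin n).succ := rfl
  rw [this, addFront_succ]
  simp

noncomputable def remFront {n : ℕ} (π : Equiv.Perm (Fin (n+1))) (h : π 0 = Fin.last n) :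
    Equiv.Perm (Fin n) :=
  Equiv.ofBijective (fun i => (π i.succ).castPred (by
      intro hc
      rw [← h] at hc
      exact Fin.succ_ne_zero i (π.injective hc)))
    (Finite.injective_iff_bijective.mp (by
      intro a b hab
      simp only at hab
      have hv : ((π a.succ : Fin (n+1)) : ℕ) = ((π b.succ : Fin (n+1)) : ℕ) := by
        simpa [Fin.coe_castPred] using congrArg Fin.val hab
      exact Fin.succ_injective _ (π.injective (Fin.ext hv))))

lemma permVal_remFront {n : ℕ} (π : Equiv.Perm (Fin (n+1))) (h : π 0 = Fin.last n)
    {i : ℕ} (hi : i < n) : permVal (remFront π h) i = permVal π (i + 1) := by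
  unfold permVal
  rw [dif_pos hi, dif_pos (by omega)]
  have : (⟨i, hi⟩ : Fin n).succ = (⟨i + 1, by omega⟩ : Fin (n+1)) := rfl
  simp [remFront, this]

lemma addFront_remFront {n : ℕ} (π : Equiv.Perm (Fin (n+1))) (h : π 0 = Fin.last n) :
    addFront (remFront π h) = π := by
  apply Equiv.ext
  intro x
  induction x using Fin.cases with
  | zero => rw [addFront_zero, h]
  | succ i => rw [addFront_succ]; simp [remFront]

lemma remFront_addFront {n : ℕ} (σ : Equiv.Perm (Fin n)) (h : addFront σ 0 = Fin.last n) :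
    remFront (addFront σ) h = σ := by
  apply Equiv.ext
  intro x
  have : (addFront σ) x.succ = (σ x).castSucc := addFront_succ σ x
  simp [remFront, this]

-- ## back insertion / removal

noncomputable def addBack {n : ℕ} (σ : Equiv.Perm (Fin n)) : Equiv.Perm (Fin (n+1)) :=
  Equiv.ofBijective (fun i => Fin.lastCases (Fin.last n) (fun j => (σ j).castSucc) i)
    (Finite.injective_iff_bijective.mp (by
      intro a b hab
      induction a using Fin.lastCases <;> induction b using Fin.lastCases <;>
        simp [(Fin.castSucc_lt_last _).ne, (Fin.castSucc_lt_last _).ne',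
          Fin.castSucc_inj] at hab ⊢
      exact hab))

lemma addBack_last {n : ℕ} (σ : Equiv.Perm (Fin n)) : addBack σ (Fin.last n) = Fin.last n := by
  simp [addBack]

lemma addBack_castSucc {n : ℕ} (σ : Equiv.Perm (Fin n)) (i : Fin n) :
    addBack σ i.castSucc = (σ i).castSucc := by
  simp [addBack]

lemma permVal_addBack_last {n : ℕ} (σ : Equiv.Perm (Fin n)) : permVal (addBack σ) n = n := by
  unfold permVal
  rw [dif_pos (by omega)]
  have : (⟨n, by omega⟩ : Fin (n+1)) = Fin.last n := rfl
  rw [this, addBack_last]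
  simp

lemma permVal_addBack_lt {n : ℕ} (σ : Equiv.Perm (Fin n)) {i : ℕ} (h : i < n) :
    permVal (addBack σ) i = permVal σ i := by
  unfold permVal
  rw [dif_pos (by omega), dif_pos h]
  have : (⟨i, by omega⟩ : Fin (n+1)) = (⟨i, h⟩ : Fin n).castSucc := rfl
  rw [this, addBack_castSucc]
  simp

noncomputable def remBack {n : ℕ} (π : Equiv.Perm (Fin (n+1))) (h : π (Fin.last n) = Fin.last n) :
    Equiv.Perm (Fin n) :=
  Equiv.ofBijective (fun i => (π i.castSucc).castPred (by
      intro hc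
      rw [← h] at hc
      exact (Fin.castSucc_lt_last i).ne (π.injective hc)))
    (Finite.injective_iff_bijective.mp (by
      intro a b hab
      simp only at hab
      have hv : ((π a.castSucc : Fin (n+1)) : ℕ) = ((π b.castSucc : Fin (n+1)) : ℕ) := by
        simpa [Fin.coe_castPred] using congrArg Fin.val hab
      exact Fin.castSucc_injective _ (π.injective (Fin.ext hv))))

lemma permVal_remBack {n : ℕ} (π : Equiv.Perm (Fin (n+1))) (h : π (Fin.last n) = Fin.last n)
    {i : ℕ} (hi : i < n) : permVal (remBack π h) i = permVal π i := by
  unfold permVal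
  rw [dif_pos hi, dif_pos (by omega)]
  have : (⟨i, hi⟩ : Fin n).castSucc = (⟨i, by omega⟩ : Fin (n+1)) := rfl
  simp [remBack, this]

lemma addBack_remBack {n : ℕ} (π : Equiv.Perm (Fin (n+1))) (h : π (Fin.last n) = Fin.last n) :
    addBack (remBack π h) = π := by
  apply Equiv.ext
  intro x
  induction x using Fin.lastCases with
  | last => rw [addBack_last, h]
  | cast i => rw [addBack_castSucc]; simp [remBack]

lemma remBack_addBack {n : ℕ} (σ : Equiv.Perm (Fin n)) (h : addBack σ (Fin.last n) = Fin.last n) :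
    remBack (addBack σ) h = σ := by
  apply Equiv.ext
  intro x
  have : (addBack σ) x.castSucc = (σ x).castSucc := addBack_castSucc σ x
  simp [remBack, this]

-- ## occurrence transfer

lemma cnt_addFront {n : ℕ} (σ : Equiv.Perm (Fin n)) (C : ℕ → ℕ → ℕ → Prop)
    [∀ a b c : ℕ, Decidable (C a b c)]
    (hC : ∀ b c, b ≤ n → c ≤ n → ¬ C n b c) :
    cnt (n+1) (permVal (addFront σ)) C = cnt n (permVal σ) C := by
  rw [cnt_front (by
    intro j hj
    rw [permVal_addFront_zero]
    exact hC _ _ (permVal_le _ _) (permVal_le _ _))]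
  apply cnt_congr
  intro i hi
  exact permVal_addFront_succ σ hi

lemma cnt_remFront {n : ℕ} (π : Equiv.Perm (Fin (n+1))) (h : π 0 = Fin.last n)
    (C : ℕ → ℕ → ℕ → Prop) [∀ a b c : ℕ, Decidable (C a b c)]
    (hC : ∀ b c, b ≤ n → c ≤ n → ¬ C n b c) :
    cnt (n+1) (permVal π) C = cnt n (permVal (remFront π h)) C := by
  have h0 : permVal π 0 = n := by
    unfold permVal
    rw [dif_pos (by omega)]
    have : (⟨0, by omega⟩ : Fin (n+1)) = 0 := rfl
    rw [this, h]; simp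
  rw [cnt_front (by
    intro j hj
    rw [h0]
    exact hC _ _ (permVal_le _ _) (permVal_le _ _))]
  apply cnt_congr
  intro i hi
  exact (permVal_remFront π h hi).symm

lemma cnt_addBack {n : ℕ} (σ : Equiv.Perm (Fin n)) (C : ℕ → ℕ → ℕ → Prop)
    [∀ a b c : ℕ, Decidable (C a b c)]
    (hC : ∀ a b, a ≤ n → b ≤ n → ¬ C a b n) :
    cnt (n+1) (permVal (addBack σ)) C = cnt n (permVal σ) C := by
  rw [cnt_back (by
    intro i hi
    rw [permVal_addBack_last]
    exact hC _ _ (permVal_le _ _) (permVal_le _ _))]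
  apply cnt_congr
  intro i hi
  exact permVal_addBack_lt σ hi

lemma cnt_remBack {n : ℕ} (π : Equiv.Perm (Fin (n+1))) (h : π (Fin.last n) = Fin.last n)
    (C : ℕ → ℕ → ℕ → Prop) [∀ a b c : ℕ, Decidable (C a b c)]
    (hC : ∀ a b, a ≤ n → b ≤ n → ¬ C a b n) :
    cnt (n+1) (permVal π) C = cnt n (permVal (remBack π h)) C := by
  have h0 : permVal π n = n := by
    unfold permVal
    rw [dif_pos (by omega)]
    have : (⟨n, by omega⟩ : Fin (n+1)) = Fin.last n := rfl
    rw [this, h]; simp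
  rw [cnt_back (by
    intro i hi
    rw [h0]
    exact hC _ _ (permVal_le _ _) (permVal_le _ _))]
  apply cnt_congr
  intro i hi
  exact (permVal_remBack π h hi).symm

lemma hC13 {n : ℕ} : ∀ b c : ℕ, b ≤ n → c ≤ n → ¬ C13 n b c := by
  intro b c hb hc ⟨h1, h2⟩; omega

lemma hC23 {n : ℕ} : ∀ b c : ℕ, b ≤ n → c ≤ n → ¬ C23 n b c := by
  intro b c hb hc ⟨h1, h2⟩; omega

lemma hC13' {n : ℕ} : ∀ a b : ℕ, a ≤ n → b ≤ n → ¬ C13 a b n := by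
  intro a b ha hb ⟨h1, h2⟩; omega

lemma hC23' {n : ℕ} : ∀ a b : ℕ, a ≤ n → b ≤ n → ¬ C23 a b n := by
  intro a b ha hb ⟨h1, h2⟩; omega

-- `Good` predicate abbreviation
def Good {n : ℕ} (π : Equiv.Perm (Fin n)) : Prop := occ13_2 π = 0 ∧ occ23_1 π = 2

instance {n : ℕ} (π : Equiv.Perm (Fin n)) : Decidable (Good π) := by
  unfold Good; infer_instance

lemma good_addFront_iff {n : ℕ} (σ : Equiv.Perm (Fin n)) : Good (addFront σ) ↔ Good σ := by
  unfold Good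
  rw [occ13_2_eq_cnt, occ23_1_eq_cnt, occ13_2_eq_cnt, occ23_1_eq_cnt,
    cnt_addFront σ C13 hC13, cnt_addFront σ C23 hC23]

lemma good_remFront_iff {n : ℕ} (π : Equiv.Perm (Fin (n+1))) (h : π 0 = Fin.last n) :
    Good (remFront π h) ↔ Good π := by
  unfold Good
  rw [occ13_2_eq_cnt, occ23_1_eq_cnt, occ13_2_eq_cnt, occ23_1_eq_cnt,
    cnt_remFront π h C13 hC13, cnt_remFront π h C23 hC23]

lemma good_addBack_iff {n : ℕ} (σ : Equiv.Perm (Fin n)) : Good (addBack σ) ↔ Good σ := by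
  unfold Good
  rw [occ13_2_eq_cnt, occ23_1_eq_cnt, occ13_2_eq_cnt, occ23_1_eq_cnt,
    cnt_addBack σ C13 hC13', cnt_addBack σ C23 hC23']

lemma good_remBack_iff {n : ℕ} (π : Equiv.Perm (Fin (n+1))) (h : π (Fin.last n) = Fin.last n) :
    Good (remBack π h) ↔ Good π := by
  unfold Good
  rw [occ13_2_eq_cnt, occ23_1_eq_cnt, occ13_2_eq_cnt, occ23_1_eq_cnt,
    cnt_remBack π h C13 hC13', cnt_remBack π h C23 hC23']

lemma permVal_front_iff {n : ℕ} (π : Equiv.Perm (Fin (n+1))) :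
    permVal π 0 = n ↔ π 0 = Fin.last n := by
  unfold permVal
  rw [dif_pos (by omega)]
  have : (⟨0, by omega⟩ : Fin (n+1)) = 0 := rfl
  rw [this]
  constructor
  · intro h; exact Fin.ext (by simpa using h)
  · intro h; rw [h]; simp

lemma permVal_back_iff {n : ℕ} (π : Equiv.Perm (Fin (n+1))) :
    permVal π n = n ↔ π (Fin.last n) = Fin.last n := by
  unfold permVal
  rw [dif_pos (by omega)]
  have : (⟨n, by omega⟩ : Fin (n+1)) = Fin.last n := rfl
  rw [this]
  constructor
  · intro h; exact Fin.ext (by simpa using h)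
  · intro h; rw [h]; simp

lemma card_front (n : ℕ) :
    (Finset.univ.filter (fun π : Equiv.Perm (Fin (n+1)) => Good π ∧ permVal π 0 = n)).card
      = (Finset.univ.filter (fun σ : Equiv.Perm (Fin n) => Good σ)).card := by
  classical
  refine Finset.card_bij' (fun π hπ => remFront π (by
      simp only [Finset.mem_filter] at hπ
      exact (permVal_front_iff π).mp hπ.2.2))
    (fun σ _ => addFront σ) ?_ ?_ ?_ ?_
  · intro π hπ
    simp only [Finset.mem_filter] at hπ ⊢
    exact ⟨Finset.mem_univ _, (good_remFront_iff π _).mpr hπ.2.1⟩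
  · intro σ hσ
    simp only [Finset.mem_filter] at hσ ⊢
    exact ⟨Finset.mem_univ _, (good_addFront_iff σ).mpr hσ.2, permVal_addFront_zero σ⟩
  · intro π hπ
    exact addFront_remFront π _
  · intro σ hσ
    exact remFront_addFront σ _

lemma card_back (n : ℕ) :
    (Finset.univ.filter (fun π : Equiv.Perm (Fin (n+1)) => Good π ∧ permVal π n = n)).card
      = (Finset.univ.filter (fun σ : Equiv.Perm (Fin n) => Good σ)).card := by
  classical
  refine Finset.card_bij' (fun π hπ => remBack π (by
      simp only [Finset.mem_filter] at hπ
      exact (permVal_back_iff π).mp hπ.2.2))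
    (fun σ _ => addBack σ) ?_ ?_ ?_ ?_
  · intro π hπ
    simp only [Finset.mem_filter] at hπ ⊢
    exact ⟨Finset.mem_univ _, (good_remBack_iff π _).mpr hπ.2.1⟩
  · intro σ hσ
    simp only [Finset.mem_filter] at hσ ⊢
    exact ⟨Finset.mem_univ _, (good_addBack_iff σ).mpr hσ.2, permVal_addBack_last σ⟩
  · intro π hπ
    exact addBack_remBack π _
  · intro σ hσ
    exact remBack_addBack σ _

-- ## the explicit exceptional family

def Fv (n k p : ℕ) : ℕ :=
  if k < 2 then
    (if p + 3 ≤ n then n - 1 - p else if p = n - 2 then n else if p = n - 1 then k else 1 - k)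
  else
    (if p + k + 1 < n then n - 1 - p else if p + 3 ≤ n then n - 2 - p
     else if p = n - 2 then k else if p = n - 1 then n else 0)

lemma Fv_le {n k : ℕ} (hn : 3 ≤ n) (hk : k ≤ n - 1) (p : ℕ) : Fv n k p ≤ n := by
  unfold Fv
  split_ifs <;> omega

lemma Fv_inj {n k : ℕ} (hn : 3 ≤ n) (hk : k ≤ n - 1) {p q : ℕ} (hp : p ≤ n) (hq : q ≤ n)
    (h : Fv n k p = Fv n k q) : p = q := by
  unfold Fv at h
  split_ifs at h <;> omega

def PhiFun (n k : ℕ) (p : Fin (n+1)) (h1 : 3 ≤ n) (h2 : k ≤ n - 1) : Fin (n+1) :=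
  ⟨Fv n k (p : ℕ), by have := Fv_le h1 h2 (p : ℕ); omega⟩

noncomputable def Phi (n k : ℕ) : Equiv.Perm (Fin (n+1)) :=
  if h : 3 ≤ n ∧ k ≤ n - 1 then
    Equiv.ofBijective (fun p => PhiFun n k p h.1 h.2)
      (Finite.injective_iff_bijective.mp (by
        intro a b hab
        simp only [PhiFun, Fin.mk.injEq] at hab
        exact Fin.ext (Fv_inj h.1 h.2 (Nat.lt_succ_iff.mp a.isLt) (Nat.lt_succ_iff.mp b.isLt) hab)))
  else 1

lemma permVal_Phi {n k : ℕ} (hn : 3 ≤ n) (hk : k ≤ n - 1) {p : ℕ} (hp : p ≤ n) :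
    permVal (Phi n k) p = Fv n k p := by
  unfold permVal
  rw [dif_pos (show p < n + 1 by omega)]
  unfold Phi
  rw [dif_pos (⟨hn, hk⟩ : 3 ≤ n ∧ k ≤ n - 1)]
  simp [PhiFun]

set_option maxHeartbeats 2000000 in
lemma occ13_2_Phi {n k : ℕ} (hn : 3 ≤ n) (hk : k ≤ n - 1) : occ13_2 (Phi n k) = 0 := by
  rw [occ13_2_eq_cnt, cnt_zero_iff]
  intro i j hij hj
  rw [permVal_Phi hn hk (by omega), permVal_Phi hn hk (by omega), permVal_Phi hn hk (by omega)]
  unfold C13 Fv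
  split_ifs <;> omega

set_option maxHeartbeats 2000000 in
lemma occ23_1_Phi {n k : ℕ} (hn : 3 ≤ n) (hk : k ≤ n - 1) : occ23_1 (Phi n k) = 2 := by
  rw [occ23_1_eq_cnt]
  unfold cnt
  by_cases hk2 : k < 2
  · have hset : ((Finset.range (n+1) ×ˢ Finset.range (n+1)).filter (fun p =>
        p.1 + 1 < p.2 ∧ C23 (permVal (Phi n k) p.1) (permVal (Phi n k) (p.1 + 1))
          (permVal (Phi n k) p.2)))
        = {((n-3 : ℕ), (n-1 : ℕ)), ((n-3 : ℕ), (n : ℕ))} := by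
      ext ⟨i, j⟩
      rw [mem_cntset]
      simp only [Finset.mem_insert, Finset.mem_singleton, Prod.mk.injEq]
      constructor
      · rintro ⟨h1, h2, h3⟩
        rw [permVal_Phi hn hk (by omega), permVal_Phi hn hk (by omega),
          permVal_Phi hn hk (by omega)] at h3
        unfold C23 Fv at h3
        split_ifs at h3 <;> omega
      · rintro (⟨rfl, rfl⟩ | ⟨rfl, rfl⟩) <;>
          refine ⟨by omega, by omega, ?_⟩ <;>
          rw [permVal_Phi hn hk (by omega), permVal_Phi hn hk (by omega),
            permVal_Phi hn hk (by omega)] <;>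
          unfold C23 Fv <;>
          split_ifs <;> omega
    rw [hset, Finset.card_insert_of_notMem (by
      simp only [Finset.mem_singleton, Prod.mk.injEq]; omega), Finset.card_singleton]
  · have hset : ((Finset.range (n+1) ×ˢ Finset.range (n+1)).filter (fun p =>
        p.1 + 1 < p.2 ∧ C23 (permVal (Phi n k) p.1) (permVal (Phi n k) (p.1 + 1))
          (permVal (Phi n k) p.2)))
        = {((n-3 : ℕ), (n : ℕ)), ((n-2 : ℕ), (n : ℕ))} := by
      ext ⟨i, j⟩
      rw [mem_cntset]
      simp only [Finset.mem_insert, Finset.mem_singleton, Prod.mk.injEq]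
      constructor
      · rintro ⟨h1, h2, h3⟩
        rw [permVal_Phi hn hk (by omega), permVal_Phi hn hk (by omega),
          permVal_Phi hn hk (by omega)] at h3
        unfold C23 Fv at h3
        split_ifs at h3 <;> omega
      · rintro (⟨rfl, rfl⟩ | ⟨rfl, rfl⟩) <;>
          refine ⟨by omega, by omega, ?_⟩ <;>
          rw [permVal_Phi hn hk (by omega), permVal_Phi hn hk (by omega),
            permVal_Phi hn hk (by omega)] <;>
          unfold C23 Fv <;>
          split_ifs <;> omega
    rw [hset, Finset.card_insert_of_notMem (by
      simp only [Finset.mem_singleton, Prod.mk.injEq]; omega), Finset.card_singleton]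

set_option maxHeartbeats 1000000 in
lemma Phi_inj {n k k' : ℕ} (hn : 3 ≤ n) (hk : k ≤ n - 1) (hk' : k' ≤ n - 1)
    (h : Phi n k = Phi n k') : k = k' := by
  have h1 : permVal (Phi n k) (n-2) = permVal (Phi n k') (n-2) := by rw [h]
  have h2 : permVal (Phi n k) (n-1) = permVal (Phi n k') (n-1) := by rw [h]
  rw [permVal_Phi hn hk (by omega), permVal_Phi hn hk' (by omega)] at h1 h2
  unfold Fv at h1 h2
  split_ifs at h1 h2 <;> omega

lemma Phi_front {n k : ℕ} (hn : 3 ≤ n) (hk : k ≤ n - 1) : permVal (Phi n k) 0 ≠ n := by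
  rw [permVal_Phi hn hk (by omega)]
  unfold Fv
  split_ifs <;> omega

lemma Phi_back {n k : ℕ} (hn : 3 ≤ n) (hk : k ≤ n - 1) : permVal (Phi n k) n ≠ n := by
  rw [permVal_Phi hn hk (by omega)]
  unfold Fv
  split_ifs <;> omega



-- descending uniqueness helper
lemma desc_unique {V : Finset ℕ} {l : ℕ} (hV : V.card = l) (g h : ℕ → ℕ)
    (hg1 : ∀ p, p < l → g p ∈ V) (hg2 : ∀ p q, p < q → q < l → g q < g p)
    (hh1 : ∀ p, p < l → h p ∈ V) (hh2 : ∀ p q, p < q → q < l → h q < h p) :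
    ∀ p, p < l → g p = h p := by
  intro p hp
  have key : ∀ (f : ℕ → ℕ), (∀ p, p < l → f p ∈ V) → (∀ p q, p < q → q < l → f q < f p) →
      ∀ x : Fin l, f (l - 1 - (x : ℕ)) = V.orderEmbOfFin hV x := by
    intro f hf1 hf2
    intro x
    have hmono : StrictMono (fun x : Fin l => f (l - 1 - (x : ℕ))) := by
      intro x y hxy
      have hxy' : (x : ℕ) < (y : ℕ) := hxy
      have hy : (y : ℕ) < l := y.isLt
      exact hf2 _ _ (by omega) (by omega)
    have := Finset.orderEmbOfFin_unique hV (f := fun x : Fin l => f (l - 1 - (x : ℕ)))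
      (fun x => hf1 _ (by omega)) hmono
    exact congrFun this x
  have e1 := key g hg1 hg2 ⟨l - 1 - p, by omega⟩
  have e2 := key h hh1 hh2 ⟨l - 1 - p, by omega⟩
  have e3 : l - 1 - (l - 1 - p) = p := by omega
  rw [e3] at e1 e2
  rw [e1, e2]

-- classification of Good perms with interior maximum

lemma permVal_coe {n : ℕ} (π : Equiv.Perm (Fin (n+1))) (x : Fin (n+1)) :
    ((π x : Fin (n+1)) : ℕ) = permVal π (x : ℕ) := by
  simp [permVal]
  intro h; exact absurd x.isLt (by omega)

lemma eq_Phi {n k : ℕ} (hn : 3 ≤ n) (hk : k ≤ n - 1) (π : Equiv.Perm (Fin (n+1)))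
    (h : ∀ p, p ≤ n → permVal π p = Fv n k p) : π = Phi n k := by
  apply Equiv.ext
  intro x
  apply Fin.ext
  rw [permVal_coe, permVal_coe, h _ (Nat.lt_succ_iff.mp x.isLt),
    permVal_Phi hn hk (Nat.lt_succ_iff.mp x.isLt)]

set_option maxHeartbeats 1600000 in
lemma classify {n : ℕ} (hn : 3 ≤ n) (π : Equiv.Perm (Fin (n+1))) (hg : Good π)
    (h0 : permVal π 0 ≠ n) (hl : permVal π n ≠ n) :
    ∃ k, k ≤ n - 1 ∧ π = Phi n k := by
  classical
  set f := permVal π with hfdef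
  have fle : ∀ i, f i ≤ n := fun i => permVal_le π i
  have finj : ∀ i j, i ≤ n → j ≤ n → f i = f j → i = j := by
    intro i j hi hj h
    exact permVal_inj π (by omega) (by omega) h
  have fsurj : ∀ v, v ≤ n → ∃ p, p ≤ n ∧ f p = v := by
    intro v hv
    obtain ⟨p, hp, he⟩ := permVal_surj π (show v < n + 1 by omega)
    exact ⟨p, by omega, he⟩
  have hg13 := hg.1
  have hg23 := hg.2
  rw [occ13_2_eq_cnt, cnt_zero_iff] at hg13
  have no13 : ∀ i j, i + 1 < j → j ≤ n → ¬(f i < f j ∧ f j < f (i + 1)) := by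
    intro i j h1 h2 hc
    exact hg13 i j h1 (by omega) hc
  set O := ((Finset.range (n+1) ×ˢ Finset.range (n+1)).filter (fun p =>
    p.1 + 1 < p.2 ∧ C23 (f p.1) (f (p.1 + 1)) (f p.2))) with hOdef
  have hOcard : O.card = 2 := by
    rw [occ23_1_eq_cnt] at hg23
    exact hg23
  have memO : ∀ i j : ℕ, (i, j) ∈ O ↔ i + 1 < j ∧ j ≤ n ∧ f j < f i ∧ f i < f (i + 1) := by
    intro i j
    rw [hOdef, mem_cntset]
    unfold C23
    constructor
    · rintro ⟨a, b, c, d⟩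
      exact ⟨a, by omega, c, d⟩
    · rintro ⟨a, b, c, d⟩
      exact ⟨a, by omega, c, d⟩
  -- the position of the maximum value n
  obtain ⟨t, ht, hft⟩ := fsurj n (le_refl n)
  have ht0 : t ≠ 0 := by
    intro h
    rw [h] at hft
    exact h0 hft
  have htn : t ≠ n := by
    intro h
    rw [h] at hft
    exact hl hft
  -- step 1 : everything after the maximum is below f (t-1), giving occurrences
  have step1 : ∀ j, t < j → j ≤ n → f j < f (t - 1) ∧ (t - 1, j) ∈ O := by
    intro j hj1 hj2
    have e : t - 1 + 1 = t := by omega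
    have hjn : f j < n := by
      have := fle j
      rcases Nat.lt_or_ge (f j) n with h | h
      · exact h
      · exfalso
        have : f j = n := by omega
        have := finj j t hj2 ht (by rw [this, hft])
        omega
    have h13 := no13 (t - 1) j (by omega) hj2
    rw [e, hft] at h13
    have hne : f j ≠ f (t - 1) := by
      intro h
      have := finj j (t - 1) hj2 (by omega) h
      omega
    have hjlt : f j < f (t - 1) := by
      rcases Nat.lt_or_ge (f j) (f (t - 1)) with h | h
      · exact h
      · exfalso
        exact h13 ⟨by omega, hjn⟩
    refine ⟨hjlt, ?_⟩
    rw [memO, e, hft]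
    have : f (t - 1) < n := by
      have := fle (t - 1)
      rcases Nat.lt_or_ge (f (t - 1)) n with h | h
      · exact h
      · exfalso
        have : f (t - 1) = n := by omega
        have := finj (t - 1) t (by omega) ht (by rw [this, hft])
        omega
    exact ⟨by omega, hj2, hjlt, this⟩
  -- step 2 : at most two positions after t
  have step2 : n ≤ t + 2 := by
    have hsub : (Finset.Ioc t n).image (fun j => ((t - 1 : ℕ), j)) ⊆ O := by
      intro x hx
      simp only [Finset.mem_image, Finset.mem_Ioc] at hx
      obtain ⟨j, ⟨hj1, hj2⟩, rfl⟩ := hx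
      exact (step1 j hj1 hj2).2
    have hcard : ((Finset.Ioc t n).image (fun j => ((t - 1 : ℕ), j))).card = n - t := by
      rw [Finset.card_image_of_injective _ (by intro a b h; exact (Prod.mk.injEq _ _ _ _).mp h |>.2),
        Nat.card_Ioc]
    have := Finset.card_le_card hsub
    rw [hcard, hOcard] at this
    omega
  have htcase : t = n - 1 ∨ t = n - 2 := by omega
  rcases htcase with ht' | ht'
  · -- CASE B : maximum at position n-1, one element after it
    have hfn1 : f (n - 1) = n := by rw [← ht']; exact hft
    have hB1 : f n < f (n - 2) ∧ (n - 2, n) ∈ O := by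
      have := step1 n (by omega) (le_refl n)
      have e : t - 1 = n - 2 := by omega
      rw [e] at this
      exact this
    -- T : ascent positions inside the prefix (i ≤ n-3)
    set T := ((Finset.range (n - 2)).filter (fun i => f i < f (i + 1))) with hTdef
    have memT : ∀ i, i ∈ T ↔ i < n - 2 ∧ f i < f (i + 1) := by
      intro i
      rw [hTdef, Finset.mem_filter, Finset.mem_range]
    have hTne : T.Nonempty := by
      by_contra hTe
      rw [Finset.not_nonempty_iff_eq_empty] at hTe
      have hdesc : ∀ i, i < n - 2 → f (i + 1) < f i := by
        intro i hi
        have h1 : i ∉ T := by rw [hTe]; exact Finset.notMem_empty i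
        rw [memT] at h1
        push_neg at h1
        have h2 := h1 hi
        have h3 : f (i + 1) ≠ f i := by
          intro h
          have := finj (i + 1) i (by omega) (by omega) h
          omega
        omega
      have hsub2 : O ⊆ {((n - 2 : ℕ), (n : ℕ))} := by
        rintro ⟨i, j⟩ hij
        rw [memO] at hij
        obtain ⟨h1, h2, h3, h4⟩ := hij
        simp only [Finset.mem_singleton, Prod.mk.injEq]
        have hin2 : ¬ i < n - 2 := by
          intro hi
          have := hdesc i hi
          omega
        have hie : i = n - 2 := by omega
        constructor
        · exact hie
        · omega
      have := Finset.card_le_card hsub2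
      rw [hOcard, Finset.card_singleton] at this
      omega
    set i₀ := T.max' hTne with hi₀def
    have hi₀mem := T.max'_mem hTne
    rw [← hi₀def] at hi₀mem
    rw [memT] at hi₀mem
    obtain ⟨hi₀lt, hi₀asc⟩ := hi₀mem
    have hmax : ∀ i, i ∈ T → i ≤ i₀ := fun i hi => T.le_max' i hi
    have hdesc_after : ∀ k, i₀ < k → k < n - 2 → f (k + 1) < f k := by
      intro k h1 h2
      have h3 : k ∉ T := by
        intro h
        have := hmax k h
        omega
      rw [memT] at h3
      push_neg at h3
      have h4 := h3 h2
      have h5 : f (k + 1) ≠ f k := by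
        intro h
        have := finj (k + 1) k (by omega) (by omega) h
        omega
      omega
    have chain : ∀ d k, i₀ < k → k + d = n - 2 → f (n - 2) ≤ f k := by
      intro d
      induction d with
      | zero =>
        intro k h1 h2
        have : k = n - 2 := by omega
        rw [this]
      | succ d ih =>
        intro k h1 h2
        have h3 : f (k + 1) < f k := hdesc_after k h1 (by omega)
        have h4 := ih (k + 1) (by omega) (by omega)
        omega
    have hi₀eq : i₀ = n - 3 := by
      by_contra hne
      have hlt : i₀ + 1 < n - 2 := by omega
      have hdesc2 : f (i₀ + 2) < f (i₀ + 1) := hdesc_after (i₀ + 1) (by omega) (by omega)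
      have h13 := no13 i₀ (i₀ + 2) (by omega) (by omega)
      have hne2 : f (i₀ + 2) ≠ f i₀ := by
        intro h
        have := finj (i₀ + 2) i₀ (by omega) (by omega) h
        omega
      have hlt2 : f (i₀ + 2) < f i₀ := by
        rcases Nat.lt_or_ge (f (i₀ + 2)) (f i₀) with h | h
        · exact h
        · exfalso
          exact h13 ⟨by omega, hdesc2⟩
      have hγ : ((i₀ : ℕ), (i₀ + 2 : ℕ)) ∈ O := by
        rw [memO]
        exact ⟨by omega, by omega, hlt2, hi₀asc⟩
      have hchain : f (n - 2) ≤ f (i₀ + 2) := chain (n - 2 - (i₀ + 2)) (i₀ + 2) (by omega) (by omega)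
      have hδ : ((i₀ : ℕ), (n : ℕ)) ∈ O := by
        rw [memO]
        refine ⟨by omega, le_refl n, by omega, hi₀asc⟩
      have hα := hB1.2
      have hsub3 : ({((n - 2 : ℕ), (n : ℕ)), ((i₀ : ℕ), (i₀ + 2 : ℕ)), ((i₀ : ℕ), (n : ℕ))} :
          Finset (ℕ × ℕ)) ⊆ O := by
        intro x hx
        simp only [Finset.mem_insert, Finset.mem_singleton] at hx
        rcases hx with rfl | rfl | rfl
        · exact hα
        · exact hγ
        · exact hδ
      have hc3 : ({((n - 2 : ℕ), (n : ℕ)), ((i₀ : ℕ), (i₀ + 2 : ℕ)), ((i₀ : ℕ), (n : ℕ))} :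
          Finset (ℕ × ℕ)).card = 3 := by
        rw [Finset.card_insert_of_notMem (by
          simp only [Finset.mem_insert, Finset.mem_singleton, Prod.mk.injEq]
          omega), Finset.card_insert_of_notMem (by
          simp only [Finset.mem_singleton, Prod.mk.injEq]
          omega), Finset.card_singleton]
      have := Finset.card_le_card hsub3
      rw [hOcard, hc3] at this
      omega
    have ha : f (n - 3) < f (n - 2) := by
      have e : n - 3 + 1 = n - 2 := by omega
      rw [← e]
      rw [hi₀eq] at hi₀asc
      exact hi₀asc
    have hzlta : f n < f (n - 3) := by
      have h13 := no13 (n - 3) n (by omega) (le_refl n)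
      have e : n - 3 + 1 = n - 2 := by omega
      rw [e] at h13
      have hne : f n ≠ f (n - 3) := by
        intro h
        have := finj n (n - 3) (le_refl n) (by omega) h
        omega
      have hzw := hB1.1
      rcases Nat.lt_or_ge (f n) (f (n - 3)) with h | h
      · exact h
      · exfalso
        exact h13 ⟨by omega, hzw⟩
    have he : ((n - 3 : ℕ), (n : ℕ)) ∈ O := by
      rw [memO]
      have e : n - 3 + 1 = n - 2 := by omega
      rw [e]
      exact ⟨by omega, le_refl n, hzlta, ha⟩
    have hOeq : O = {((n - 2 : ℕ), (n : ℕ)), ((n - 3 : ℕ), (n : ℕ))} := by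
      have hsub : ({((n - 2 : ℕ), (n : ℕ)), ((n - 3 : ℕ), (n : ℕ))} : Finset (ℕ × ℕ)) ⊆ O := by
        intro x hx
        simp only [Finset.mem_insert, Finset.mem_singleton] at hx
        rcases hx with rfl | rfl
        · exact hB1.2
        · exact he
      have hc2 : ({((n - 2 : ℕ), (n : ℕ)), ((n - 3 : ℕ), (n : ℕ))} : Finset (ℕ × ℕ)).card = 2 := by
        rw [Finset.card_insert_of_notMem (by
          simp only [Finset.mem_singleton, Prod.mk.injEq]
          omega), Finset.card_singleton]
      exact (Finset.eq_of_subset_of_card_le hsub (by omega)).symm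
    -- z = 0
    have hz0 : f n = 0 := by
      by_contra hz1
      have hz1' : 1 ≤ f n := by omega
      obtain ⟨p, hp, hfp⟩ := fsurj 0 (by omega)
      have hp1 : p ≠ n := by
        intro h
        rw [h] at hfp
        omega
      have hp2 : p ≠ n - 1 := by
        intro h
        rw [h, hfn1] at hfp
        omega
      have hp3 : p ≠ n - 2 := by
        intro h
        rw [h] at hfp
        have := hB1.1
        omega
      have hp4 : p ≠ n - 3 := by
        intro h
        rw [h] at hfp
        omega
      have hp5 : p + 4 ≤ n := by omega
      set U := ((Finset.Icc p (n - 4)).filter (fun i => f i < f n)) with hUdef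
      have memU : ∀ i, i ∈ U ↔ (p ≤ i ∧ i ≤ n - 4) ∧ f i < f n := by
        intro i
        rw [hUdef, Finset.mem_filter, Finset.mem_Icc]
      have hUne : U.Nonempty := by
        refine ⟨p, ?_⟩
        rw [memU]
        exact ⟨⟨le_refl p, by omega⟩, by omega⟩
      set r := U.max' hUne with hrdef
      have hrmem := U.max'_mem hUne
      rw [memU] at hrmem
      obtain ⟨⟨hr1, hr2⟩, hr3⟩ := hrmem
      have hr4 : f n < f (r + 1) := by
        rcases Nat.lt_or_ge (r + 1) (n - 3) with h | h
        · have : r + 1 ∉ U := by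
            intro hmem
            have := U.le_max' (r + 1) hmem
            omega
          rw [memU] at this
          push_neg at this
          have h5 := this ⟨by omega, by omega⟩
          have h6 : f (r + 1) ≠ f n := by
            intro hh
            have := finj (r + 1) n (by omega) (le_refl n) hh
            omega
          omega
        · have : r + 1 = n - 3 := by omega
          rw [this]
          exact hzlta
      exact no13 r n (by omega) (le_refl n) ⟨hr3, hr4⟩
    -- prefix strictly descending
    have hpre : ∀ i, i + 1 ≤ n - 3 → f (i + 1) < f i := by
      intro i hi
      by_contra hasc
      have hasc' : f i < f (i + 1) := by
        have : f i ≠ f (i + 1) := by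
          intro h
          have := finj i (i + 1) (by omega) (by omega) h
          omega
        omega
      have hfi : 0 < f i := by
        rcases Nat.eq_zero_or_pos (f i) with h | h
        · exfalso
          have : i = n := finj i n (by omega) (le_refl n) (by rw [h, hz0])
          omega
        · exact h
      have hδ : ((i : ℕ), (n : ℕ)) ∈ O := by
        rw [memO]
        refine ⟨by omega, le_refl n, by rw [hz0]; omega, hasc'⟩
      rw [hOeq] at hδ
      simp only [Finset.mem_insert, Finset.mem_singleton, Prod.mk.injEq] at hδ
      omega
    -- assemble
    set k := f (n - 2) with hkdef
    have hk2 : 2 ≤ k := by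
      have h1 : 1 ≤ f (n - 3) := by
        rcases Nat.eq_zero_or_pos (f (n - 3)) with h | h
        · exfalso
          have : n - 3 = n := finj (n - 3) n (by omega) (le_refl n) (by rw [h, hz0])
          omega
        · exact h
      omega
    have hkn : k ≤ n - 1 := by
      have h1 : k ≤ n := fle (n - 2)
      have h2 : k ≠ n := by
        intro h
        have : n - 2 = n - 1 := finj (n - 2) (n - 1) (by omega) (by omega) (by rw [← hkdef, h, hfn1])
        omega
      omega
    -- prefix values
    have hVcard : (((Finset.Ioo 0 n).erase k)).card = n - 2 := by
      rw [Finset.card_erase_of_mem (by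
        rw [Finset.mem_Ioo]
        omega), Nat.card_Ioo]
      omega
    have mono : ∀ d p, p + d ≤ n - 3 → f (p + d) ≤ f p := by
      intro d
      induction d with
      | zero =>
        intro p _
        exact le_refl _
      | succ d ih =>
        intro p hp
        have h1 := ih p (by omega)
        have h2 : f (p + d + 1) < f (p + d) := hpre (p + d) (by omega)
        have e : p + (d + 1) = p + d + 1 := by omega
        rw [e]
        omega
    have fdesc : ∀ p q, p < q → q < n - 2 → f q < f p := by
      intro p q h1 h2
      have h3 := mono (q - (p + 1)) (p + 1) (by omega)
      have e : p + 1 + (q - (p + 1)) = q := by omega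
      rw [e] at h3
      have h4 := hpre p (by omega)
      omega
    have hformula : ∀ p, p < n - 2 → f p = (if p + k + 1 < n then n - 1 - p else n - 2 - p) := by
      apply desc_unique hVcard f (fun p => if p + k + 1 < n then n - 1 - p else n - 2 - p)
      · intro p hp
        rw [Finset.mem_erase, Finset.mem_Ioo]
        have h1 : f p ≠ k := by
          intro h
          have : p = n - 2 := finj p (n - 2) (by omega) (by omega) (by rw [h, hkdef])
          omega
        have h2 : 0 < f p := by
          rcases Nat.eq_zero_or_pos (f p) with h | h
          · exfalso
            have : p = n := finj p n (by omega) (le_refl n) (by rw [h, hz0])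
            omega
          · exact h
        have h3 : f p < n := by
          have h4 : f p ≤ n := fle p
          have h5 : f p ≠ n := by
            intro h
            have : p = n - 1 := finj p (n - 1) (by omega) (by omega) (by rw [h, hfn1])
            omega
          omega
        exact ⟨h1, h2, h3⟩
      · exact fdesc
      · intro p hp
        rw [Finset.mem_erase, Finset.mem_Ioo]
        split_ifs with h <;> constructor <;> omega
      · intro p q h1 h2
        split_ifs <;> omega
    refine ⟨k, hkn, eq_Phi hn hkn π ?_⟩
    intro p hp
    rw [← hfdef]
    rcases Nat.lt_or_ge p (n - 2) with hc | hc
    · rw [hformula p hc]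
      unfold Fv
      split_ifs <;> omega
    · have : p = n - 2 ∨ p = n - 1 ∨ p = n := by omega
      rcases this with rfl | rfl | rfl
      · rw [← hkdef]
        unfold Fv
        split_ifs <;> omega
      · rw [hfn1]
        unfold Fv
        split_ifs <;> omega
      · rw [hz0]
        unfold Fv
        split_ifs <;> omega
  · -- CASE A : maximum at position n-2, two elements after it
    have hfn2 : f (n - 2) = n := by rw [← ht']; exact hft
    have et : t - 1 = n - 3 := by omega
    have hA1 := step1 (n - 1) (by omega) (by omega)
    have hA2 := step1 n (by omega) (le_refl n)
    rw [et] at hA1 hA2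
    -- O is exactly the two occurrences
    have hOeq : O = {((n - 3 : ℕ), (n - 1 : ℕ)), ((n - 3 : ℕ), (n : ℕ))} := by
      have hsub : ({((n - 3 : ℕ), (n - 1 : ℕ)), ((n - 3 : ℕ), (n : ℕ))} : Finset (ℕ × ℕ)) ⊆ O := by
        intro x hx
        simp only [Finset.mem_insert, Finset.mem_singleton] at hx
        rcases hx with rfl | rfl
        · exact hA1.2
        · exact hA2.2
      have hc2 : ({((n - 3 : ℕ), (n - 1 : ℕ)), ((n - 3 : ℕ), (n : ℕ))} : Finset (ℕ × ℕ)).card = 2 := by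
        rw [Finset.card_insert_of_notMem (by
          simp only [Finset.mem_singleton, Prod.mk.injEq]
          omega), Finset.card_singleton]
      exact (Finset.eq_of_subset_of_card_le hsub (by omega)).symm
    -- prefix strictly descending
    have hpre : ∀ i, i + 1 ≤ n - 3 → f (i + 1) < f i := by
      intro i hi
      by_contra hasc
      have hasc' : f i < f (i + 1) := by
        have : f i ≠ f (i + 1) := by
          intro h
          have := finj i (i + 1) (by omega) (by omega) h
          omega
        omega
      -- so the ascent set T' is nonempty
      have hT'ne : ((Finset.range (n - 3)).filter (fun i => f i < f (i + 1))).Nonempty := by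
        refine ⟨i, ?_⟩
        rw [Finset.mem_filter, Finset.mem_range]
        exact ⟨by omega, hasc'⟩
      set i₀ := ((Finset.range (n - 3)).filter (fun i => f i < f (i + 1))).max' hT'ne with hi₀def
      have hi₀mem := ((Finset.range (n - 3)).filter (fun i => f i < f (i + 1))).max'_mem hT'ne
      rw [← hi₀def] at hi₀mem
      rw [Finset.mem_filter, Finset.mem_range] at hi₀mem
      obtain ⟨hi₀lt, hi₀asc⟩ := hi₀mem
      have hdesc_after : ∀ k, i₀ < k → k < n - 3 → f (k + 1) < f k := by
        intro k h1 h2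
        have h3 : k ∉ ((Finset.range (n - 3)).filter (fun i => f i < f (i + 1))) := by
          intro h
          have := ((Finset.range (n - 3)).filter (fun i => f i < f (i + 1))).le_max' k h
          omega
        rw [Finset.mem_filter, Finset.mem_range] at h3
        push_neg at h3
        have h4 := h3 h2
        have h5 : f (k + 1) ≠ f k := by
          intro h
          have := finj (k + 1) k (by omega) (by omega) h
          omega
        omega
      have chain : ∀ d k, i₀ < k → k + d = n - 3 → f (n - 3) ≤ f k := by
        intro d
        induction d with
        | zero =>
          intro k h1 h2
          have : k = n - 3 := by omega
          rw [this]
        | succ d ih =>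
          intro k h1 h2
          have h3 : f (k + 1) < f k := hdesc_after k h1 (by omega)
          have h4 := ih (k + 1) (by omega) (by omega)
          omega
      rcases Nat.lt_or_ge (i₀ + 1) (n - 3) with hcase | hcase
      · -- early ascent : (i₀, n) is a third occurrence
        have hdesc2 : f (i₀ + 2) < f (i₀ + 1) := hdesc_after (i₀ + 1) (by omega) (by omega)
        have h13b := no13 i₀ (i₀ + 2) (by omega) (by omega)
        have hne2 : f (i₀ + 2) ≠ f i₀ := by
          intro h
          have := finj (i₀ + 2) i₀ (by omega) (by omega) h
          omega
        have hlt2 : f (i₀ + 2) < f i₀ := by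
          rcases Nat.lt_or_ge (f (i₀ + 2)) (f i₀) with h | h
          · exact h
          · exfalso
            exact h13b ⟨by omega, hdesc2⟩
        have hchain : f (n - 3) ≤ f (i₀ + 2) := chain (n - 3 - (i₀ + 2)) (i₀ + 2) (by omega) (by omega)
        have hδ : ((i₀ : ℕ), (n : ℕ)) ∈ O := by
          rw [memO]
          have : f n < f (n - 3) := hA2.1
          refine ⟨by omega, le_refl n, by omega, hi₀asc⟩
        rw [hOeq] at hδ
        simp only [Finset.mem_insert, Finset.mem_singleton, Prod.mk.injEq] at hδ
        omega
      · -- ascent into position n-3 : (n-4, n-1) is a third occurrence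
        have hi₀' : i₀ + 1 = n - 3 := by omega
        have hn4 : 4 ≤ n := by omega
        have h13 := no13 i₀ (n - 1) (by omega) (by omega)
        have e : i₀ + 1 = n - 3 := hi₀'
        rw [e] at h13
        have hz1w : f (n - 1) < f (n - 3) := hA1.1
        have hne : f (n - 1) ≠ f i₀ := by
          intro h
          have := finj (n - 1) i₀ (by omega) (by omega) h
          omega
        have hlt : f (n - 1) < f i₀ := by
          rcases Nat.lt_or_ge (f (n - 1)) (f i₀) with h | h
          · exact h
          · exfalso
            exact h13 ⟨by omega, hz1w⟩
        have hδ : ((i₀ : ℕ), (n - 1 : ℕ)) ∈ O := by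
          rw [memO]
          exact ⟨by omega, by omega, hlt, hi₀asc⟩
        rw [hOeq] at hδ
        simp only [Finset.mem_insert, Finset.mem_singleton, Prod.mk.injEq] at hδ
        omega
    -- monotone chain on the prefix
    have mono : ∀ d p, p + d ≤ n - 3 → f (p + d) ≤ f p := by
      intro d
      induction d with
      | zero =>
        intro p _
        exact le_refl _
      | succ d ih =>
        intro p hp
        have h1 := ih p (by omega)
        have h2 : f (p + d + 1) < f (p + d) := hpre (p + d) (by omega)
        have e : p + (d + 1) = p + d + 1 := by omega
        rw [e]
        omega
    -- the two last values are 0 and 1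
    have hsmall : (f (n - 1) = 0 ∧ f n = 1) ∨ (f (n - 1) = 1 ∧ f n = 0) := by
      obtain ⟨p, hp, hfp⟩ := fsurj 0 (by omega)
      obtain ⟨q, hq, hfq⟩ := fsurj 1 (by omega)
      have hpq : p ≠ q := by
        intro h
        rw [h, hfq] at hfp
        omega
      have hp2 : p ≠ n - 2 := by
        intro h
        rw [h, hfn2] at hfp
        omega
      have hq2 : q ≠ n - 2 := by
        intro h
        rw [h, hfn2] at hfq
        omega
      have hple : ¬ p ≤ n - 3 := by
        intro hc
        have h1 := mono (n - 3 - p) p (by omega)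
        have e : p + (n - 3 - p) = n - 3 := by omega
        rw [e, hfp] at h1
        have := hA1.1
        omega
      have hqle : ¬ q ≤ n - 3 := by
        intro hc
        have h1 := mono (n - 3 - q) q (by omega)
        have e : q + (n - 3 - q) = n - 3 := by omega
        rw [e, hfq] at h1
        have h2 := hA1.1
        have h3 := hA2.1
        have h4 : f (n - 1) ≠ f n := by
          intro h
          have := finj (n - 1) n (by omega) (le_refl n) h
          omega
        omega
      have hpv : p = n - 1 ∨ p = n := by omega
      have hqv : q = n - 1 ∨ q = n := by omega
      rcases hpv with rfl | rfl
      · rcases hqv with h | h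
        · omega
        · rw [h] at hfq
          left
          exact ⟨hfp, hfq⟩
      · rcases hqv with h | h
        · rw [h] at hfq
          right
          exact ⟨hfq, hfp⟩
        · omega
    set k := f (n - 1) with hkdef
    have hk1 : k ≤ 1 := by omega
    have hkn : k ≤ n - 1 := by omega
    -- prefix identity
    have hVcard : ((Finset.Ioo 1 n)).card = n - 2 := by
      rw [Nat.card_Ioo]
      omega
    have hformula : ∀ p, p < n - 2 → f p = n - 1 - p := by
      apply desc_unique hVcard f (fun p => n - 1 - p)
      · intro p hp
        rw [Finset.mem_Ioo]
        have h1 : f p ≠ 0 := by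
          intro h
          rcases hsmall with ⟨h2, h3⟩ | ⟨h2, h3⟩
          · have : p = n - 1 := finj p (n - 1) (by omega) (by omega) (by rw [h, ← hkdef, h2])
            omega
          · have : p = n := finj p n (by omega) (le_refl n) (by rw [h, h3])
            omega
        have h2 : f p ≠ 1 := by
          intro h
          rcases hsmall with ⟨h2, h3⟩ | ⟨h2, h3⟩
          · have : p = n := finj p n (by omega) (le_refl n) (by rw [h, h3])
            omega
          · have : p = n - 1 := finj p (n - 1) (by omega) (by omega) (by rw [h, ← hkdef, h2])
            omega
        have h3 : f p ≠ n := by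
          intro h
          have : p = n - 2 := finj p (n - 2) (by omega) (by omega) (by rw [h, hfn2])
          omega
        have h4 := fle p
        omega
      · intro p q h1 h2
        have h3 := mono (q - (p + 1)) (p + 1) (by omega)
        have e : p + 1 + (q - (p + 1)) = q := by omega
        rw [e] at h3
        have h4 := hpre p (by omega)
        omega
      · intro p hp
        rw [Finset.mem_Ioo]
        omega
      · intro p q h1 h2
        omega
    refine ⟨k, hkn, eq_Phi hn hkn π ?_⟩
    intro p hp
    rw [← hfdef]
    rcases Nat.lt_or_ge p (n - 2) with hc | hc
    · rw [hformula p hc]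
      unfold Fv
      split_ifs <;> omega
    · have hpv : p = n - 2 ∨ p = n - 1 ∨ p = n := by omega
      rcases hpv with hpe | hpe | hpe <;> rw [hpe]
      · rw [hfn2]
        unfold Fv
        split_ifs <;> omega
      · rw [← hkdef]
        unfold Fv
        split_ifs <;> omega
      · have hfn : f n = 1 - k := by omega
        rw [hfn]
        unfold Fv
        split_ifs <;> omega

-- ## assembling the count

noncomputable def Acard (m : ℕ) : ℕ :=
  (Finset.univ.filter (fun π : Equiv.Perm (Fin m) => Good π)).card

lemma Acard_eq (m : ℕ) :
    (Finset.univ.filter (fun π : Equiv.Perm (Fin m) =>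
      occ13_2 π = 0 ∧ occ23_1 π = 2)).card = Acard m := by
  unfold Acard
  congr 1

lemma Acard_three : Acard 3 = 0 := by
  unfold Acard
  rw [Finset.card_eq_zero, Finset.filter_eq_empty_iff]
  intro π _
  unfold Good
  rintro ⟨-, h2⟩
  have hle : occ23_1 π ≤ 1 := by
    rw [occ23_1_eq_cnt]
    unfold cnt
    have hsub : ((Finset.range 3 ×ˢ Finset.range 3).filter (fun p =>
        p.1 + 1 < p.2 ∧ C23 (permVal π p.1) (permVal π (p.1 + 1)) (permVal π p.2)))
        ⊆ {((0 : ℕ), (2 : ℕ))} := by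
      rintro ⟨i, j⟩ h
      rw [mem_cntset] at h
      simp only [Finset.mem_singleton, Prod.mk.injEq]
      omega
    have := Finset.card_le_card hsub
    rw [Finset.card_singleton] at this
    exact this
  omega

lemma Acard_rec (n : ℕ) (hn : 3 ≤ n) : Acard (n + 1) = 2 * Acard n + n := by
  classical
  have hsplit1 :
      (Finset.univ.filter (fun π : Equiv.Perm (Fin (n+1)) => Good π)).card
      = ((Finset.univ.filter (fun π : Equiv.Perm (Fin (n+1)) => Good π)).filter
          (fun π => permVal π 0 = n)).card
        + ((Finset.univ.filter (fun π : Equiv.Perm (Fin (n+1)) => Good π)).filter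
          (fun π => ¬ permVal π 0 = n)).card :=
    (Finset.card_filter_add_card_filter_not _).symm
  have hsplit2 :
      ((Finset.univ.filter (fun π : Equiv.Perm (Fin (n+1)) => Good π)).filter
          (fun π => ¬ permVal π 0 = n)).card
      = (((Finset.univ.filter (fun π : Equiv.Perm (Fin (n+1)) => Good π)).filter
          (fun π => ¬ permVal π 0 = n)).filter (fun π => permVal π n = n)).card
        + (((Finset.univ.filter (fun π : Equiv.Perm (Fin (n+1)) => Good π)).filter
          (fun π => ¬ permVal π 0 = n)).filter (fun π => ¬ permVal π n = n)).card :=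
    (Finset.card_filter_add_card_filter_not _).symm
  -- first part : top value at the front
  have hpart1 :
      ((Finset.univ.filter (fun π : Equiv.Perm (Fin (n+1)) => Good π)).filter
          (fun π => permVal π 0 = n)).card = Acard n := by
    rw [Finset.filter_filter]
    exact card_front n
  -- second part : top value at the back
  have hpart2 :
      (((Finset.univ.filter (fun π : Equiv.Perm (Fin (n+1)) => Good π)).filter
          (fun π => ¬ permVal π 0 = n)).filter (fun π => permVal π n = n)).card = Acard n := by
    rw [Finset.filter_filter, Finset.filter_filter]
    have he : (Finset.univ.filter (fun π : Equiv.Perm (Fin (n+1)) =>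
        Good π ∧ ¬ permVal π 0 = n ∧ permVal π n = n))
        = (Finset.univ.filter (fun π : Equiv.Perm (Fin (n+1)) =>
        Good π ∧ permVal π n = n)) := by
      apply Finset.filter_congr
      intro π _
      constructor
      · rintro ⟨h1, _, h3⟩
        exact ⟨h1, h3⟩
      · rintro ⟨h1, h3⟩
        refine ⟨h1, ?_, h3⟩
        intro h0
        have := permVal_inj π (show (0:ℕ) < n+1 by omega) (show n < n+1 by omega) (by rw [h0, h3])
        omega
    rw [he]
    exact card_back n
  -- third part : top value interior
  have hpart3 :
      (((Finset.univ.filter (fun π : Equiv.Perm (Fin (n+1)) => Good π)).filter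
          (fun π => ¬ permVal π 0 = n)).filter (fun π => ¬ permVal π n = n)).card = n := by
    rw [Finset.filter_filter, Finset.filter_filter]
    have he : (Finset.univ.filter (fun π : Equiv.Perm (Fin (n+1)) =>
        Good π ∧ ¬ permVal π 0 = n ∧ ¬ permVal π n = n))
        = (Finset.range n).image (fun k => Phi n k) := by
      apply Finset.Subset.antisymm
      · intro π hπ
        simp only [Finset.mem_filter] at hπ
        obtain ⟨-, h1, h2, h3⟩ := hπ
        obtain ⟨k, hk, rfl⟩ := classify hn π h1 h2 h3
        simp only [Finset.mem_image, Finset.mem_range]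
        exact ⟨k, by omega, rfl⟩
      · intro π hπ
        simp only [Finset.mem_image, Finset.mem_range] at hπ
        obtain ⟨k, hk, rfl⟩ := hπ
        simp only [Finset.mem_filter]
        exact ⟨Finset.mem_univ _, ⟨occ13_2_Phi hn (by omega), occ23_1_Phi hn (by omega)⟩,
          Phi_front hn (by omega), Phi_back hn (by omega)⟩
    rw [he, Finset.card_image_of_injOn, Finset.card_range]
    intro a ha b hb hab
    simp only [Finset.coe_range, Set.mem_Iio] at ha hb
    exact Phi_inj hn (by omega) (by omega) hab
  unfold Acard at hpart1 hpart2 ⊢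
  omega

theorem stmt13 (n : ℕ) (hn : 3 ≤ n) :
    (Finset.univ.filter (fun π : Equiv.Perm (Fin n) =>
      occ13_2 π = 0 ∧ occ23_1 π = 2)).card = 2 ^ (n - 1) - n - 1 := by
  have main : ∀ m, 3 ≤ m → Acard m + (m + 1) = 2 ^ (m - 1) := by
    intro m hm
    induction m, hm using Nat.le_induction with
    | base =>
      rw [Acard_three]
      rfl
    | succ m hm ih =>
      rw [Acard_rec m hm]
      have e : m + 1 - 1 = (m - 1) + 1 := by omega
      rw [e, pow_succ]
      omega
  rw [Acard_eq]
  have := main n hn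
  omega
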